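/- Let R be a unique factorization domain of finite character with Krull dimension 2. Then every maximal ideal M of R of height 2 is the radical of an ideal generated by two elements of R. -/

import Mathlib

/-- The height of an ideal `I`: the infimum of the heights (in the prime spectrum)
of the prime ideals containing `I`. -/
noncomputable def idealHeight (R : Type*) [CommRing R] (I : Ideal R) : ℕ∞ :=
  ⨅ P : {P : PrimeSpectrum R // I ≤ P.asIdeal}, Order.height P.1

/-- An ideal `I` is radically perfect if its height equals the least number `n` such that
`√I` is the radical of an ideal generated by `n` elements, and moreover, if `ht I = 0`,
then `√I` is the radical of a principal ideal generated by a zero divisor. -/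
def RadicallyPerfect {R : Type*} [CommRing R] (I : Ideal R) : Prop :=
  idealHeight R I = sInf {n : ℕ∞ | ∃ s : Finset R,
      (s.card : ℕ∞) = n ∧ (Ideal.span (s : Set R)).radical = I.radical} ∧
    (idealHeight R I = 0 → ∃ θ : R, θ ∉ nonZeroDivisors R ∧
      I.radical = (Ideal.span {θ} : Ideal R).radical)

/-- The set of ideals of `R` generated by `ht P` elements whose radical equals `P`. -/
def genHtRad {R : Type*} [CommRing R] (P : Ideal R) : Set (Ideal R) :=
  {A | ∃ s : Finset R, (s.card : ℕ∞) = idealHeight R P ∧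
    Ideal.span (s : Set R) = A ∧ A.radical = P}

/-- A commutative ring `R` is radically finite if every prime ideal `P` of `R` is radically
perfect, the set of ideals generated by `ht P` elements with radical `P` has a maximal
member `A`, and every chain of ideals between `A` and `P` is finite. -/
def RadicallyFinite (R : Type*) [CommRing R] : Prop :=
  ∀ P : Ideal R, P.IsPrime → RadicallyPerfect P ∧
    ∃ A ∈ genHtRad P, (∀ B ∈ genHtRad P, A ≤ B → B = A) ∧
      ∀ C : Set (Ideal R), IsChain (· ≤ ·) C → C ⊆ Set.Icc A P → C.Finite

/-- A ring is of finite character if each nonzero element lies in only finitely many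
maximal ideals. -/
def FiniteCharacter (R : Type*) [CommRing R] : Prop :=
  ∀ x : R, x ≠ 0 → {M : Ideal R | M.IsMaximal ∧ x ∈ M}.Finite


open UniqueFactorizationMonoid in
private lemma aux_exists_prime_mem {R : Type*} [CommRing R] [IsDomain R]
    [UniqueFactorizationMonoid R] {P : Ideal R} (hP : P.IsPrime) {x : R} (hx0 : x ≠ 0)
    (hx : x ∈ P) : ∃ q : R, Prime q ∧ q ∣ x ∧ q ∈ P := by
  have hprod : (factors x).prod ∈ P := by
    obtain ⟨u, hu⟩ := factors_prod hx0
    have h : (factors x).prod = x * (u⁻¹ : Rˣ) := (Units.eq_mul_inv_iff_mul_eq u).mpr hu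
    rw [h]; exact Ideal.mul_mem_right _ _ hx
  obtain ⟨q, hqmem, hqP⟩ := (hP.multiset_prod_mem_iff_exists_mem _).mp hprod
  exact ⟨q, prime_of_factor q hqmem, dvd_of_mem_factors hqmem, hqP⟩

private lemma aux_height_one {R : Type*} [CommRing R] [IsDomain R]
    [UniqueFactorizationMonoid R] {p : R} (hp : Prime p) {Q : Ideal R} (hQ : Q.IsPrime)
    (hQ0 : Q ≠ ⊥) (hle : Q ≤ Ideal.span {p}) : Q = Ideal.span {p} := by
  obtain ⟨x, hxQ, hx0⟩ := Submodule.exists_mem_ne_zero_of_ne_bot hQ0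
  obtain ⟨q, hq, hqx, hqQ⟩ := aux_exists_prime_mem hQ hx0 hxQ
  have hpq : p ∣ q := Ideal.mem_span_singleton.mp (hle hqQ)
  obtain ⟨c, hc⟩ := (hp.associated_of_dvd hq hpq).symm.dvd
  refine le_antisymm hle ?_
  rw [Ideal.span_singleton_le_iff_mem, hc]
  exact Ideal.mul_mem_right _ _ hqQ

private lemma aux_maximal {R : Type*} [CommRing R] [IsDomain R]
    (hdim : ringKrullDim R = 2) {p : R} (hp : Prime p) {J : Ideal R} (hJ : J.IsPrime)
    (hlt : Ideal.span {p} < J) : J.IsMaximal := by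
  by_contra hmax
  obtain ⟨N, hN, hJN⟩ := J.exists_le_maximal hJ.ne_top
  have hJN' : J < N := lt_of_le_of_ne hJN (fun h => hmax (h ▸ hN))
  let x0 : PrimeSpectrum R := ⟨⊥, Ideal.bot_prime⟩
  let x1 : PrimeSpectrum R := ⟨Ideal.span {p}, (Ideal.span_singleton_prime hp.ne_zero).mpr hp⟩
  let x2 : PrimeSpectrum R := ⟨J, hJ⟩
  let x3 : PrimeSpectrum R := ⟨N, hN.isPrime⟩
  have h01 : x0 < x1 := by
    rw [← PrimeSpectrum.asIdeal_lt_asIdeal]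
    exact bot_lt_iff_ne_bot.mpr (by simp [x1, Ideal.span_singleton_eq_bot, hp.ne_zero])
  have h12 : x1 < x2 := by rw [← PrimeSpectrum.asIdeal_lt_asIdeal]; exact hlt
  have h23 : x2 < x3 := by rw [← PrimeSpectrum.asIdeal_lt_asIdeal]; exact hJN'
  let chain : LTSeries (PrimeSpectrum R) :=
    (((RelSeries.singleton _ x0).snoc x1 h01).snoc x2 (by exact h12)).snoc x3
      (by exact h23)
  have hlen := Order.LTSeries.length_le_krullDim chain
  have h2 : Order.krullDim (PrimeSpectrum R) = 2 := hdim
  rw [h2, show chain.length = 3 from rfl] at hlen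
  norm_num at hlen


/-- In a UFD of finite character with Krull dimension 2, every maximal ideal of height 2
is the radical of an ideal generated by two elements. -/
theorem ufd_finiteCharacter_dim_two_maximal_radical_two_gen {R : Type*} [CommRing R]
    [IsDomain R] [UniqueFactorizationMonoid R] (hfc : FiniteCharacter R)
    (hdim : ringKrullDim R = 2) (M : Ideal R) (hM : M.IsMaximal)
    (hht : idealHeight R M = 2) :
    ∃ a b : R, M = (Ideal.span ({a, b} : Set R)).radical := by
  classical
  have hMpt : ((2 : ℕ) : ℕ∞) ≤ Order.height (⟨M, hM.isPrime⟩ : PrimeSpectrum R) := by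
    rw [show ((2:ℕ) : ℕ∞) = 2 by norm_cast, ← hht]
    unfold idealHeight
    exact iInf_le (fun P : {P : PrimeSpectrum R // M ≤ P.asIdeal} => Order.height P.1)
      ⟨⟨M, hM.isPrime⟩, le_refl _⟩
  obtain ⟨ser, hlast, hlen⟩ := Order.exists_series_of_le_height _ hMpt
  have h1len : 1 < ser.length + 1 := by omega
  have h0len : 0 < ser.length + 1 := by omega
  set Q := ser ⟨1, h1len⟩ with hQdef
  have hQM : Q.asIdeal < M := by
    have : Q < (⟨M, hM.isPrime⟩ : PrimeSpectrum R) := by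
      rw [← hlast]
      apply ser.strictMono
      show (⟨1, h1len⟩ : Fin (ser.length + 1)) < Fin.last ser.length
      rw [Fin.lt_def, Fin.val_last]
      show (1 : ℕ) < ser.length
      omega
    exact (PrimeSpectrum.asIdeal_lt_asIdeal _ _).mpr this
  have hQbot : (⊥ : Ideal R) < Q.asIdeal := by
    refine lt_of_le_of_lt bot_le ((PrimeSpectrum.asIdeal_lt_asIdeal (ser ⟨0, h0len⟩) Q).mpr ?_)
    exact ser.strictMono (Fin.mk_lt_mk.mpr one_pos)
  have hMbot : M ≠ ⊥ := by
    intro h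
    exact absurd (hQM.trans_le (le_of_eq h)) (not_lt_of_ge bot_le)
  obtain ⟨a, haM, ha0⟩ := Submodule.exists_mem_ne_zero_of_ne_bot hMbot
  let T1 : Finset (Ideal R) :=
    (UniqueFactorizationMonoid.factors a).toFinset.image fun p => Ideal.span {p}
  let T2 : Finset (Ideal R) := (hfc a ha0).toFinset.erase M
  let T : Finset (Ideal R) := T1 ∪ T2
  have hTprime : ∀ I ∈ T, I.IsPrime := by
    intro I hI
    rcases Finset.mem_union.mp hI with h | h
    · obtain ⟨p, hp, rfl⟩ := Finset.mem_image.mp h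
      have hp' : Prime p :=
        UniqueFactorizationMonoid.prime_of_factor p (Multiset.mem_toFinset.mp hp)
      exact (Ideal.span_singleton_prime hp'.ne_zero).mpr hp'
    · exact ((Set.Finite.mem_toFinset _).mp (Finset.mem_of_mem_erase h)).1.isPrime
  have hnotle : ∀ I ∈ T, ¬ M ≤ I := by
    intro I hI hle
    rcases Finset.mem_union.mp hI with h | h
    · obtain ⟨p, hpmem, rfl⟩ := Finset.mem_image.mp h
      have hp' : Prime p :=
        UniqueFactorizationMonoid.prime_of_factor p (Multiset.mem_toFinset.mp hpmem)
      have hMeq : M = Ideal.span {p} :=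
        hM.eq_of_le ((Ideal.span_singleton_prime hp'.ne_zero).mpr hp').ne_top hle
      have hQlt : Q.asIdeal < Ideal.span {p} := hMeq ▸ hQM
      exact absurd (aux_height_one hp' Q.isPrime hQbot.ne' hQlt.le) hQlt.ne
    · have hNmax := ((Set.Finite.mem_toFinset _).mp (Finset.mem_of_mem_erase h)).1
      exact Finset.ne_of_mem_erase h (hM.eq_of_le hNmax.ne_top hle).symm
  have hnsub : ¬ ((M : Set R) ⊆ ⋃ I ∈ (↑T : Set (Ideal R)), (I : Set R)) := by
    rw [Ideal.subset_union_prime ⊥ ⊥ (fun I hI _ _ => hTprime I hI)]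
    push_neg
    exact hnotle
  obtain ⟨b, hbM, hb⟩ := Set.not_subset.mp hnsub
  have hb' : ∀ I ∈ T, b ∉ I := by
    intro I hI hbI
    exact hb (Set.mem_biUnion hI hbI)
  have key : ∀ J : Ideal R, J.IsPrime → Ideal.span {a, b} ≤ J → J = M := by
    intro J hJ hle
    have haJ : a ∈ J := hle (Ideal.subset_span (by simp))
    have hbJ : b ∈ J := hle (Ideal.subset_span (by simp))
    obtain ⟨q, hq, hqa, hqJ⟩ := aux_exists_prime_mem hJ ha0 haJ
    obtain ⟨q', hq'mem, hassoc⟩ :=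
      UniqueFactorizationMonoid.exists_mem_factors_of_dvd ha0 hq.irreducible hqa
    have hq' : Prime q' := UniqueFactorizationMonoid.prime_of_factor _ hq'mem
    have hspan_eq : Ideal.span ({q'} : Set R) = Ideal.span ({q} : Set R) :=
      Ideal.span_singleton_eq_span_singleton.mpr hassoc.symm
    have hspanT : Ideal.span ({q'} : Set R) ∈ T :=
      Finset.mem_union_left _
        (Finset.mem_image.mpr ⟨q', Multiset.mem_toFinset.mpr hq'mem, rfl⟩)
    have hbns : b ∉ Ideal.span ({q'} : Set R) := hb' _ hspanT
    have hlt : Ideal.span ({q'} : Set R) < J := by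
      refine lt_of_le_of_ne ?_ fun h => hbns (h ▸ hbJ)
      rw [hspan_eq, Ideal.span_singleton_le_iff_mem]
      exact hqJ
    have hJmax : J.IsMaximal := aux_maximal hdim hq' hJ hlt
    by_contra hne
    exact hb' J
      (Finset.mem_union_right _
        (Finset.mem_erase.mpr ⟨hne, (Set.Finite.mem_toFinset _).mpr ⟨hJmax, haJ⟩⟩)) hbJ
  refine ⟨a, b, ?_⟩
  rw [Ideal.radical_eq_sInf]
  apply le_antisymm
  · exact le_sInf fun J hJ => (key J hJ.2 hJ.1).ge
  · exact sInf_le ⟨Ideal.span_le.mpr (by simp [Set.insert_subset_iff, haM, hbM]), hM.isPrime⟩
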